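/- arXiv:1107.3592 — 3 statements merged into one kernel-verified Lean document; each statement's English description precedes it below -/
import Mathlib

section
/- If M : [0,T) → ℝ^{d×d} is a differentiable solution of the closed Doi equation dM/dt = κM + Mκᵀ - (2/tr M)(κ:M)M + 4N(2M² - (2/tr M)(M:M)M) + 2Id - (2d/tr M)M, and M(t) is symmetric for all t with tr(M(t)) > 0, then d/dt tr(M(t)) = 0 for all t. -/
open Matrix

/-- Along a symmetric solution with positive trace of the closed Doi equation,
the trace is conserved: `d/dt tr(M(t)) = 0`. -/
theorem stmt_4 {d : ℕ} (κ : Matrix (Fin d) (Fin d) ℝ) (N T : ℝ)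
    (M : ℝ → Matrix (Fin d) (Fin d) ℝ)
    (hM : ∀ t ∈ Set.Ico (0:ℝ) T, ∀ i j,
      HasDerivAt (fun s => M s i j)
        ((κ * M t + M t * (κ.transpose)
          - ((2 / (M t).trace) * ∑ i', ∑ j', κ i' j' * M t i' j') • M t
          + (4 * N) • ((2:ℝ) • (M t * M t)
              - ((2 / (M t).trace) * ∑ i', ∑ j', M t i' j' * M t i' j') • M t)
          + (2:ℝ) • (1 : Matrix (Fin d) (Fin d) ℝ)
          - ((2 * d) / (M t).trace) • M t) i j) t)
    (hsym : ∀ t ∈ Set.Ico (0:ℝ) T, (M t).transpose = M t)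
    (htr : ∀ t ∈ Set.Ico (0:ℝ) T, 0 < (M t).trace) :
    ∀ t ∈ Set.Ico (0:ℝ) T, HasDerivAt (fun s => (M s).trace) 0 t := by
  intro t ht
  have hc : (M t).trace ≠ 0 := ne_of_gt (htr t ht)
  have hs : ∀ i j, M t j i = M t i j := fun i j =>
    congrFun (congrFun (hsym t ht) i) j
  set A := M t with hA
  set X := (κ * A + A * (κ.transpose)
          - ((2 / A.trace) * ∑ i', ∑ j', κ i' j' * A i' j') • A
          + (4 * N) • ((2:ℝ) • (A * A)
              - ((2 / A.trace) * ∑ i', ∑ j', A i' j' * A i' j') • A)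
          + (2:ℝ) • (1 : Matrix (Fin d) (Fin d) ℝ)
          - ((2 * d) / A.trace) • A) with hX
  have h1 : (κ * A).trace = ∑ i', ∑ j', κ i' j' * A i' j' := by
    simp only [Matrix.trace, Matrix.diag, Matrix.mul_apply]
    exact Finset.sum_congr rfl fun i _ => Finset.sum_congr rfl fun j _ => by rw [hs]
  have h2 : (A * κ.transpose).trace = ∑ i', ∑ j', κ i' j' * A i' j' := by
    simp only [Matrix.trace, Matrix.diag, Matrix.mul_apply, Matrix.transpose_apply]
    exact Finset.sum_congr rfl fun i _ => Finset.sum_congr rfl fun j _ => by ring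
  have h3 : (A * A).trace = ∑ i', ∑ j', A i' j' * A i' j' := by
    simp only [Matrix.trace, Matrix.diag, Matrix.mul_apply]
    exact Finset.sum_congr rfl fun i _ => Finset.sum_congr rfl fun j _ => by rw [hs]
  have hz : X.trace = 0 := by
    rw [hX]
    simp only [Matrix.trace_add, Matrix.trace_sub, Matrix.trace_smul, Matrix.trace_one,
      h1, h2, h3, smul_eq_mul, Fintype.card_fin]
    field_simp
    ring
  have hder : HasDerivAt (fun s => ∑ i, M s i i) (∑ i, X i i) t :=
    HasDerivAt.fun_sum (fun i _ => hM t ht i i)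
  have htrace : ∀ s, (M s).trace = ∑ i, M s i i := fun s => rfl
  have hzz : (∑ i, X i i) = 0 := by
    have : X.trace = ∑ i, X i i := rfl
    rw [← this, hz]
  simp only [htrace]
  rw [← hzz]
  exact hder
end

section
/- In dimension d = 2, writing Q = M - Id/2 = [[x, y],[y, -x]] with tr(M)=1, the Doi closure equation dM/dt = κM + Mκᵀ - 2(κ:M)M + 8N(M² - (M:M)M) + 4(Id/2 - M) with κ = (Pe/2)[[0, a+1],[a-1, 0]] is equivalent to the planar system dx/dt = -4x(1 - N + 4N(x²+y²)) + Pe·y(1 - 2ax), dy/dt = -4y(1 - N + 4N(x²+y²)) + Pe(-x + a/2 - 2ay²). -/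
open Matrix

/-- In dimension 2, with `M = Id/2 + [[x,y],[y,-x]]` of trace one, the Doi closure ODE
is equivalent to the planar system on `(x,y)`. -/
theorem stmt_6 (Pe a N : ℝ) (x y : ℝ → ℝ) (t : ℝ)
    (κ : Matrix (Fin 2) (Fin 2) ℝ) (hκ : κ = (Pe / 2) • !![0, a + 1; a - 1, 0])
    (M : ℝ → Matrix (Fin 2) (Fin 2) ℝ)
    (hM : ∀ s, M s = !![1/2 + x s, y s; y s, 1/2 - x s]) :
    (∀ i j, HasDerivAt (fun s => M s i j)
        ((κ * M t + M t * κ.transpose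
          - ((2:ℝ) * ∑ i', ∑ j', κ i' j' * M t i' j') • M t
          + (8 * N) • (M t * M t - (∑ i', ∑ j', M t i' j' * M t i' j') • M t)
          + (4:ℝ) • ((1/2 : ℝ) • (1 : Matrix (Fin 2) (Fin 2) ℝ) - M t)) i j) t)
    ↔ (HasDerivAt x
          (-4 * x t * (1 - N + 4 * N * (x t ^ 2 + y t ^ 2))
            + Pe * y t * (1 - 2 * a * x t)) t
        ∧ HasDerivAt y
          (-4 * y t * (1 - N + 4 * N * (x t ^ 2 + y t ^ 2))
            + Pe * (-(x t) + a / 2 - 2 * a * y t ^ 2)) t) := by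
  constructor
  · intro h
    have h00 := h 0 0
    have h01 := h 0 1
    simp only [hM, hκ, Matrix.mul_apply, Fin.sum_univ_two, Matrix.smul_apply,
      Matrix.one_apply, Matrix.sub_apply, Matrix.add_apply, Matrix.transpose_apply,
      Matrix.cons_val', Matrix.cons_val_zero, Matrix.cons_val_one, Matrix.head_cons,
      Matrix.head_fin_const, Matrix.empty_val', Matrix.cons_val_fin_one, Matrix.of_apply,
      smul_eq_mul] at h00 h01
    have hx := h00.sub_const (1/2)
    simp only [add_sub_cancel_left] at hx
    constructor
    · convert hx using 1
      · rfl
      · rfl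
      norm_num
      ring
    · convert h01 using 1
      norm_num
      ring
  · rintro ⟨hx, hy⟩ i j
    fin_cases i <;> fin_cases j <;>
      simp only [Fin.zero_eta, Fin.mk_one, hM, hκ, Matrix.mul_apply, Fin.sum_univ_two, Matrix.smul_apply,
        Matrix.one_apply, Matrix.sub_apply, Matrix.add_apply, Matrix.transpose_apply,
        Matrix.cons_val', Matrix.cons_val_zero, Matrix.cons_val_one, Matrix.head_cons,
        Matrix.head_fin_const, Matrix.empty_val', Matrix.cons_val_fin_one, Matrix.of_apply,
        smul_eq_mul]
    · convert hx.const_add (1/2) using 1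
      · rfl
      · rfl
      norm_num
      ring
    · convert hy using 1
      norm_num
      ring
    · convert hy using 1
      norm_num
      ring
    · convert hx.const_sub (1/2) using 1
      · rfl
      · rfl
      norm_num
      ring
end

section
/- Let Y¹,…,Y^I be i.i.d. square-integrable random vectors in ℝ^d with E‖Y¹‖² = L² > 0 and E‖Y¹‖⁴ < ∞, and define Z^i = Y^i (L (I⁻¹ Σ_j ‖Y^j‖²)^{-1/2} - 1) (on the event Σ_j ‖Y^j‖² > 0). Then E‖Z^i‖² ≤ (1/(I L²)) Var(‖Y¹‖²). -/
open MeasureTheory ProbabilityTheory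

private lemma stmt_19_key_ineq {L : ℝ} (hL : 0 < L) {s : ℝ} (hs : 0 ≤ s) :
    (L / Real.sqrt s - 1) ^ 2 * s ≤ (s - L ^ 2) ^ 2 / L ^ 2 := by
  rcases eq_or_lt_of_le hs with h | h
  · rw [← h]
    simp only [mul_zero]
    positivity
  · set t := Real.sqrt s with ht
    have ht0 : 0 < t := Real.sqrt_pos.2 h
    have hts : t ^ 2 = s := Real.sq_sqrt hs
    rw [← hts]
    have h1 : (L / t - 1) ^ 2 * t ^ 2 = (L - t) ^ 2 := by
      field_simp
      try ring
    rw [h1, le_div_iff₀ (by positivity)]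
    nlinarith [mul_nonneg (sq_nonneg (L - t)) (sq_nonneg t),
      mul_nonneg (mul_nonneg hL.le ht0.le) (sq_nonneg (L - t))]

/-- Initial coupling error bound: for i.i.d. `Y^j` with `E‖Y¹‖² = L²`, the renormalized
differences `Z^i = (L(I⁻¹Σ‖Y^j‖²)^{-1/2} - 1) Y^i` satisfy
`E‖Z^i‖² ≤ Var(‖Y¹‖²)/(I L²)`. -/
theorem stmt_19 {Ω : Type*} [MeasurableSpace Ω] (μ : Measure Ω)
    [IsProbabilityMeasure μ] (d I : ℕ) (hI : 0 < I) (L : ℝ) (hL : 0 < L)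
    (Y : Fin I → Ω → EuclideanSpace ℝ (Fin d))
    (hmeas : ∀ j, Measurable (Y j))
    (hindep : iIndepFun Y μ)
    (hid : ∀ j k, IdentDistrib (Y j) (Y k) μ μ)
    (hL2 : ∀ j, ∫ ω, ‖Y j ω‖ ^ 2 ∂μ = L ^ 2)
    (hmom4 : ∀ j, Integrable (fun ω => ‖Y j ω‖ ^ 4) μ)
    (Z : Fin I → Ω → EuclideanSpace ℝ (Fin d))
    (hZ : ∀ i ω, Z i ω
      = (L / Real.sqrt ((I : ℝ)⁻¹ * ∑ j, ‖Y j ω‖ ^ 2) - 1) • Y i ω) :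
    ∀ (i j₀ : Fin I),
      ∫ ω, ‖Z i ω‖ ^ 2 ∂μ
        ≤ (1 / ((I : ℝ) * L ^ 2)) * ∫ ω, (‖Y j₀ ω‖ ^ 2 - L ^ 2) ^ 2 ∂μ := by
  intro i j₀
  classical
  have hIne : (I : ℝ) ≠ 0 := Nat.cast_ne_zero.2 hI.ne'
  set q : ℝ → ℝ := fun s => (L / Real.sqrt s - 1) ^ 2 with hqdef
  have qmeas : Measurable q :=
    ((measurable_const.div Real.continuous_sqrt.measurable).sub measurable_const).pow_const 2
  set X : Fin I → Ω → ℝ := fun k ω => ‖Y k ω‖ ^ 2 with hXdef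
  have hXm : ∀ k, Measurable (X k) := fun k => (hmeas k).norm.pow_const 2
  have hXnn : ∀ k ω, 0 ≤ X k ω := fun k ω => by positivity
  have hXsq : ∀ k, Integrable (fun ω => X k ω ^ 2) μ := by
    intro k
    have h4 := hmom4 k
    have : (fun ω => X k ω ^ 2) = fun ω => ‖Y k ω‖ ^ 4 := by
      funext ω; simp only [hXdef]; ring
    rw [this]; exact h4
  have hXmem : ∀ k, MemLp (X k) 2 μ := fun k =>
    (memLp_two_iff_integrable_sq (hXm k).aestronglyMeasurable).2 (hXsq k)
  have hXint : ∀ k, Integrable (X k) μ := fun k => (hXmem k).integrable one_le_two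
  have hXE : ∀ k, ∫ ω, X k ω ∂μ = L ^ 2 := fun k => hL2 k
  set Sb : Ω → ℝ := fun ω => (I : ℝ)⁻¹ * ∑ k, X k ω with hSbdef
  have hSbm : Measurable Sb :=
    measurable_const.mul (Finset.measurable_sum _ fun k _ => hXm k)
  have hSbnn : ∀ ω, 0 ≤ Sb ω := fun ω =>
    mul_nonneg (by positivity) (Finset.sum_nonneg fun k _ => hXnn k ω)
  have hSummem : MemLp (fun ω => ∑ k, X k ω) 2 μ := by
    have h := memLp_finset_sum' (μ := μ) Finset.univ (f := X) (fun k _ => hXmem k)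
    have heq : (∑ k : Fin I, X k) = fun ω => ∑ k, X k ω := by
      funext ω; simp
    rwa [heq] at h
  have hSbmem : MemLp Sb 2 μ := hSummem.const_mul _
  have hSbint : Integrable Sb μ := hSbmem.integrable one_le_two
  have hSbE : ∫ ω, Sb ω ∂μ = L ^ 2 := by
    simp only [hSbdef]
    rw [integral_const_mul, integral_finset_sum _ (fun k _ => hXint k)]
    simp only [hXE, Finset.sum_const, Finset.card_univ, Fintype.card_fin, nsmul_eq_mul]
    field_simp
  set Dsq : Ω → ℝ := fun ω => (Sb ω - L ^ 2) ^ 2 with hDdef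
  have hDint : Integrable Dsq μ := by
    have h1 : MemLp (fun ω => Sb ω - L ^ 2) 2 μ := hSbmem.sub (memLp_const _)
    have h2 := h1.integrable_sq
    have : (fun ω => (Sb ω - L ^ 2) ^ 2) = fun ω => (Sb ω - L ^ 2) * (Sb ω - L ^ 2) := by
      funext ω; ring
    rw [hDdef, this]
    simpa [sq] using h2
  -- pointwise bounds
  have hkey : ∀ ω, q (Sb ω) * Sb ω ≤ Dsq ω / L ^ 2 := fun ω =>
    stmt_19_key_ineq hL (hSbnn ω)
  have hDbound : ∀ k ω, q (Sb ω) * X k ω ≤ (I : ℝ) * (Dsq ω / L ^ 2) := by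
    intro k ω
    have h1 : X k ω ≤ ∑ j, X j ω :=
      Finset.single_le_sum (fun j _ => hXnn j ω) (Finset.mem_univ k)
    have h2 : (0:ℝ) ≤ q (Sb ω) := sq_nonneg _
    calc q (Sb ω) * X k ω ≤ q (Sb ω) * ∑ j, X j ω := mul_le_mul_of_nonneg_left h1 h2
      _ = (I : ℝ) * (q (Sb ω) * Sb ω) := by
          simp only [hSbdef]; field_simp; try ring
      _ ≤ (I : ℝ) * (Dsq ω / L ^ 2) :=
          mul_le_mul_of_nonneg_left (hkey ω) (Nat.cast_nonneg I)
  have hGm : ∀ k, Measurable (fun ω => q (Sb ω) * X k ω) := fun k =>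
    (qmeas.comp hSbm).mul (hXm k)
  have hBint : Integrable (fun ω => (I : ℝ) * (Dsq ω / L ^ 2)) μ :=
    (hDint.div_const _).const_mul _
  have hGnn : ∀ k ω, (0:ℝ) ≤ q (Sb ω) * X k ω := fun k ω =>
    mul_nonneg (sq_nonneg _) (hXnn k ω)
  have hGint : ∀ k, Integrable (fun ω => q (Sb ω) * X k ω) μ := fun k =>
    Integrable.mono' hBint (hGm k).aestronglyMeasurable
      (Filter.Eventually.of_forall fun ω => by
        rw [Real.norm_eq_abs, abs_of_nonneg (hGnn k ω)]; exact hDbound k ω)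
  have hQSint : Integrable (fun ω => q (Sb ω) * Sb ω) μ :=
    Integrable.mono' (hDint.div_const _) ((qmeas.comp hSbm).mul hSbm).aestronglyMeasurable
      (Filter.Eventually.of_forall fun ω => by
        rw [Real.norm_eq_abs, abs_of_nonneg (mul_nonneg (sq_nonneg _) (hSbnn ω))]
        exact hkey ω)
  -- independence and identical distribution of the X k
  have hXindep : iIndepFun X μ :=
    hindep.comp (fun _ v => ‖v‖ ^ 2) (fun _ => measurable_norm.pow_const 2)
  have hidX : ∀ k l, IdentDistrib (X k) (X l) μ μ := fun k l =>
    (hid k l).comp (measurable_norm.pow_const 2)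
  set ν : Measure ℝ := μ.map (X j₀) with hνdef
  have hνprob : IsProbabilityMeasure ν := Measure.isProbabilityMeasure_map (hXm j₀).aemeasurable
  set W : Ω → (Fin I → ℝ) := fun ω k => X k ω with hWdef
  have hWm : Measurable W := measurable_pi_lambda _ fun k => hXm k
  have hmapX : ∀ k, μ.map (X k) = ν := fun k => (hidX k j₀).map_eq
  have hmap : μ.map W = Measure.pi (fun _ : Fin I => ν) := by
    refine (Measure.pi_eq fun s hs => ?_).symm
    rw [Measure.map_apply hWm (MeasurableSet.univ_pi hs)]
    have hpre : W ⁻¹' Set.univ.pi s = ⋂ k ∈ Finset.univ, X k ⁻¹' s k := by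
      ext ω; simp [hWdef, Set.mem_pi]
    rw [hpre, hXindep.measure_inter_preimage_eq_mul Finset.univ (fun k _ => hs k)]
    exact Finset.prod_congr rfl fun k _ => by
      rw [← hmapX k, Measure.map_apply (hXm k) (hs k)]
  have hFm : ∀ k : Fin I,
      Measurable (fun x : Fin I → ℝ => q ((I : ℝ)⁻¹ * ∑ j, x j) * x k) := fun k =>
    (qmeas.comp (measurable_const.mul
      (Finset.measurable_sum _ fun j _ => measurable_pi_apply j))).mul (measurable_pi_apply k)
  have htrans : ∀ k, ∫ ω, q (Sb ω) * X k ω ∂μ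
      = ∫ x, q ((I : ℝ)⁻¹ * ∑ j, x j) * x k ∂(Measure.pi fun _ : Fin I => ν) := by
    intro k
    rw [← hmap, integral_map hWm.aemeasurable (hFm k).aestronglyMeasurable]
  -- exchangeability via permutation invariance of the product measure
  have hexch : ∀ k, ∫ x, q ((I : ℝ)⁻¹ * ∑ j, x j) * x k ∂(Measure.pi fun _ : Fin I => ν)
      = ∫ x, q ((I : ℝ)⁻¹ * ∑ j, x j) * x i ∂(Measure.pi fun _ : Fin I => ν) := by
    intro k
    have hσ : MeasurePreserving
        (MeasurableEquiv.piCongrLeft (fun _ : Fin I => ℝ) (Equiv.swap i k))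
        (Measure.pi fun _ => ν) (Measure.pi fun _ => ν) :=
      measurePreserving_piCongrLeft (fun _ => ν) (Equiv.swap i k)
    have happly : ∀ (x : Fin I → ℝ) (b : Fin I),
        MeasurableEquiv.piCongrLeft (fun _ : Fin I => ℝ) (Equiv.swap i k) x b
          = x (Equiv.swap i k b) := by
      intro x b
      rw [MeasurableEquiv.coe_piCongrLeft]
      conv_lhs => rw [show b = Equiv.swap i k (Equiv.swap i k b) from
        (Equiv.swap_apply_self i k b).symm]
      exact Equiv.piCongrLeft_apply_apply (fun _ : Fin I => ℝ) (Equiv.swap i k) x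
        (Equiv.swap i k b)
    have hfeq : (fun x : Fin I → ℝ =>
          q ((I : ℝ)⁻¹ * ∑ j, (MeasurableEquiv.piCongrLeft (fun _ : Fin I => ℝ)
            (Equiv.swap i k) x) j)
          * (MeasurableEquiv.piCongrLeft (fun _ : Fin I => ℝ) (Equiv.swap i k) x) i)
        = fun x : Fin I → ℝ => q ((I : ℝ)⁻¹ * ∑ j, x j) * x k := by
      funext x
      simp only [happly]
      rw [show (∑ j, x (Equiv.swap i k j)) = ∑ j, x j from Equiv.sum_comp _ x,
        Equiv.swap_apply_left]
    calc ∫ x, q ((I : ℝ)⁻¹ * ∑ j, x j) * x k ∂(Measure.pi fun _ : Fin I => ν)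
        = ∫ x, (fun y : Fin I → ℝ => q ((I : ℝ)⁻¹ * ∑ j, y j) * y i)
            (MeasurableEquiv.piCongrLeft (fun _ : Fin I => ℝ) (Equiv.swap i k) x)
            ∂(Measure.pi fun _ : Fin I => ν) := by
          rw [← hfeq]
      _ = ∫ x, q ((I : ℝ)⁻¹ * ∑ j, x j) * x i ∂(Measure.pi fun _ : Fin I => ν) :=
          hσ.integral_comp' (fun y : Fin I → ℝ => q ((I : ℝ)⁻¹ * ∑ j, y j) * y i)
  have hEq : ∀ k, ∫ ω, q (Sb ω) * X k ω ∂μ = ∫ ω, q (Sb ω) * X i ω ∂μ := fun k => by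
    rw [htrans k, hexch k, ← htrans i]
  -- averaging
  have hsum1 : ∫ ω, q (Sb ω) * X i ω ∂μ = ∫ ω, q (Sb ω) * Sb ω ∂μ := by
    have h1 : (I : ℝ) * ∫ ω, q (Sb ω) * X i ω ∂μ
        = ∑ k : Fin I, ∫ ω, q (Sb ω) * X k ω ∂μ := by
      simp [hEq, Finset.sum_const, Finset.card_univ, nsmul_eq_mul]
    have h2 : ∑ k : Fin I, ∫ ω, q (Sb ω) * X k ω ∂μ
        = ∫ ω, q (Sb ω) * (∑ k, X k ω) ∂μ := by
      rw [← integral_finset_sum _ (fun k _ => hGint k)]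
      congr 1; funext ω; rw [Finset.mul_sum]
    have h3 : ∫ ω, q (Sb ω) * (∑ k, X k ω) ∂μ = (I : ℝ) * ∫ ω, q (Sb ω) * Sb ω ∂μ := by
      rw [← integral_const_mul]
      congr 1; funext ω
      simp only [hSbdef]
      field_simp
      try ring
    have h4 := h1.trans (h2.trans h3)
    exact mul_left_cancel₀ hIne h4
  have hle : ∫ ω, q (Sb ω) * Sb ω ∂μ ≤ ∫ ω, Dsq ω / L ^ 2 ∂μ :=
    integral_mono hQSint (hDint.div_const _) hkey
  -- variance computation
  have hVXj : variance (X j₀) μ = ∫ ω, (X j₀ ω - L ^ 2) ^ 2 ∂μ := by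
    rw [variance_eq_integral (hXm j₀).aemeasurable, hXE j₀]
  have hsum_eq : (∑ k : Fin I, X k) = fun ω => ∑ k, X k ω := by funext ω; simp
  have hVsum : variance (fun ω => ∑ k, X k ω) μ = (I : ℝ) * variance (X j₀) μ := by
    have hps : Set.Pairwise ↑(Finset.univ : Finset (Fin I))
        fun k l => IndepFun (X k) (X l) μ :=
      fun k _ l _ hkl => hXindep.indepFun hkl
    have h := IndepFun.variance_sum (fun k _ => hXmem k) hps
    rw [hsum_eq] at h
    rw [h]
    have hVeq : ∀ k, variance (X k) μ = variance (X j₀) μ := fun k =>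
      (hidX k j₀).variance_eq
    simp [hVeq, Finset.sum_const, Finset.card_univ, nsmul_eq_mul]
  have hVSb : variance Sb μ = (I : ℝ)⁻¹ * variance (X j₀) μ := by
    have heq : Sb = fun ω => (I : ℝ)⁻¹ * (fun ω' => ∑ k, X k ω') ω := rfl
    rw [heq, variance_const_mul, hVsum]
    field_simp
    try ring
  have hDvar : ∫ ω, Dsq ω ∂μ = (I : ℝ)⁻¹ * ∫ ω, (X j₀ ω - L ^ 2) ^ 2 ∂μ := by
    have h1 : variance Sb μ = ∫ ω, Dsq ω ∂μ := by
      rw [variance_eq_integral hSbm.aemeasurable, hSbE]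
    rw [← h1, hVSb, hVXj]
  -- conclusion
  have hZeq : ∫ ω, ‖Z i ω‖ ^ 2 ∂μ = ∫ ω, q (Sb ω) * X i ω ∂μ := by
    congr 1; funext ω
    rw [hZ i ω, norm_smul, Real.norm_eq_abs, mul_pow, sq_abs]
  rw [hZeq, hsum1]
  calc ∫ ω, q (Sb ω) * Sb ω ∂μ ≤ ∫ ω, Dsq ω / L ^ 2 ∂μ := hle
    _ = (∫ ω, Dsq ω ∂μ) / L ^ 2 := integral_div _ _
    _ = (1 / ((I : ℝ) * L ^ 2)) * ∫ ω, (X j₀ ω - L ^ 2) ^ 2 ∂μ := by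
        rw [hDvar]; field_simp; try ring
end
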